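/- Let e be a unit vector in ℝⁿ and V a linear subspace with dist(e, V) ≥ ϑ for some ϑ ∈ (0,1]. Let ê := P_{V^⊥} e / |P_{V^⊥} e|, where P_{V^⊥} is orthogonal projection onto V^⊥. Then for every σ ∈ (0,1) with √(1−σ²) > √(1−ϑ²), the cone C(e,σ) := {x : ⟨x,e⟩ ≥ √(1−σ²)|x|} is contained in C(ê, σ'') where σ'' is defined by √(1−σ''²) = √(1−σ²) − √(1−ϑ²). -/

import Mathlib

open Metric
open scoped RealInnerProductSpace

/-- The cone `C(e,σ) = {x : ⟪x,e⟫ ≥ √(1−σ²) |x|}` of axis `e` and amplitude `σ`. -/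
def coneS {n : ℕ} (e : EuclideanSpace ℝ (Fin n)) (σ : ℝ) : Set (EuclideanSpace ℝ (Fin n)) :=
  {x | Real.sqrt (1 - σ ^ 2) * ‖x‖ ≤ ⟪x, e⟫}

/-- If `dist(e,V) ≥ ϑ` and `ê = P_{V^⊥}e/|P_{V^⊥}e|`, then
`C(e,σ) ⊆ C(ê,σ'')` where `√(1−σ''²) = √(1−σ²) − √(1−ϑ²)`; i.e. every `x ∈ C(e,σ)`
satisfies `⟪x,ê⟫ ≥ (√(1−σ²) − √(1−ϑ²))|x|`. -/
theorem stmt17 {n : ℕ} (V : Submodule ℝ (EuclideanSpace ℝ (Fin n)))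
    (e : EuclideanSpace ℝ (Fin n)) (he : ‖e‖ = 1)
    (ϑ σ : ℝ) (hϑ0 : 0 < ϑ) (hϑ1 : ϑ ≤ 1) (hσ0 : 0 < σ) (hσ1 : σ < 1)
    (hdist : ϑ ≤ Metric.infDist e (V : Set (EuclideanSpace ℝ (Fin n))))
    (hgt : Real.sqrt (1 - ϑ ^ 2) < Real.sqrt (1 - σ ^ 2)) :
    coneS e σ ⊆
      {x | (Real.sqrt (1 - σ ^ 2) - Real.sqrt (1 - ϑ ^ 2)) * ‖x‖ ≤
        ⟪x, ‖((Submodule.orthogonalProjectionOnto Vᗮ e : Vᗮ) : EuclideanSpace ℝ (Fin n))‖⁻¹ •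
          ((Submodule.orthogonalProjectionOnto Vᗮ e : Vᗮ) : EuclideanSpace ℝ (Fin n))⟫} := by
  set p : EuclideanSpace ℝ (Fin n) := ((Submodule.orthogonalProjectionOnto Vᗮ e : Vᗮ) : EuclideanSpace ℝ (Fin n))
    with hp
  set q : EuclideanSpace ℝ (Fin n) := ((Submodule.orthogonalProjectionOnto V e : V) : EuclideanSpace ℝ (Fin n))
    with hq
  have hsum : q + p = e := V.starProjection_add_starProjection_orthogonal e
  have hqp : ⟪q, p⟫ = 0 := by
    exact (Submodule.coe_mem (Submodule.orthogonalProjectionOnto Vᗮ e)) q (Submodule.coe_mem _)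
  -- infDist e V = ‖p‖
  have hdistp : Metric.infDist e (V : Set (EuclideanSpace ℝ (Fin n))) = ‖p‖ := by
    have h1 : e - q = p := by rw [← hsum]; abel
    have h2 : ‖e - (Submodule.orthogonalProjectionOnto V e : EuclideanSpace ℝ (Fin n))‖
        = ⨅ x : V, ‖e - x‖ := Submodule.starProjection_minimal e
    rw [Metric.infDist_eq_iInf]
    simp only [dist_eq_norm]
    rw [← h1, h2]
    rfl
  have hlam : ϑ ≤ ‖p‖ := hdistp ▸ hdist
  have hlam0 : 0 < ‖p‖ := lt_of_lt_of_le hϑ0 hlam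
  -- Pythagoras
  have hpyth : ‖q‖ ^ 2 + ‖p‖ ^ 2 = 1 := by
    have := norm_add_sq_real q p
    rw [hsum, he, hqp] at this
    nlinarith [this]
  have hq2 : ‖q‖ ^ 2 = 1 - ‖p‖ ^ 2 := by linarith
  have hqn : ‖q‖ = Real.sqrt (1 - ‖p‖ ^ 2) := by
    rw [← hq2, Real.sqrt_sq (norm_nonneg q)]
  have hqle : ‖q‖ ≤ Real.sqrt (1 - ϑ ^ 2) := by
    rw [hqn]
    apply Real.sqrt_le_sqrt
    nlinarith
  intro x hx
  simp only [coneS, Set.mem_setOf_eq] at hx ⊢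
  have hxe : ⟪x, e⟫ = ⟪x, q⟫ + ⟪x, p⟫ := by rw [← hsum, inner_add_right]
  have hxq : ⟪x, q⟫ ≤ ‖x‖ * Real.sqrt (1 - ϑ ^ 2) := by
    calc ⟪x, q⟫ ≤ ‖x‖ * ‖q‖ := real_inner_le_norm x q
      _ ≤ ‖x‖ * Real.sqrt (1 - ϑ ^ 2) := by
          exact mul_le_mul_of_nonneg_left hqle (norm_nonneg x)
  have hxp : (Real.sqrt (1 - σ ^ 2) - Real.sqrt (1 - ϑ ^ 2)) * ‖x‖ ≤ ⟪x, p⟫ := by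
    rw [mul_comm] at hxq
    rw [sub_mul]
    linarith
  have hxp0 : 0 ≤ ⟪x, p⟫ := by
    have : 0 ≤ (Real.sqrt (1 - σ ^ 2) - Real.sqrt (1 - ϑ ^ 2)) * ‖x‖ :=
      mul_nonneg (by linarith) (norm_nonneg x)
    linarith
  have hlam1 : ‖p‖ ≤ 1 := by nlinarith [sq_nonneg ‖q‖]
  have hinv : (1 : ℝ) ≤ ‖p‖⁻¹ := by
    rw [le_inv_comm₀ one_pos hlam0]; simpa using hlam1
  rw [real_inner_smul_right]
  calc (Real.sqrt (1 - σ ^ 2) - Real.sqrt (1 - ϑ ^ 2)) * ‖x‖ ≤ ⟪x, p⟫ := hxp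
    _ ≤ ‖p‖⁻¹ * ⟪x, p⟫ := le_mul_of_one_le_left hxp0 hinv
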